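/- Let G = (V,E) be a noncompact connected metric graph with finitely many edges and non-empty compact core K (K is the subgraph consisting of all bounded edges of G, with vertex set V and bounded-edge set E_K), and let p > 2, ρ ∈ [1/2,1]. Suppose u ∈ H¹(G) is a weak solution of u'' = 0 on every edge together with the vertex conditions Σ_{e≻v} u_e'(v) = −ρ|u(v)|^{p−2}u(v) at every vertex v, i.e. ∫_G u'η' dx = ρΣ_{v∈V}|u(v)|^{p−2}u(v)η(v) for all η ∈ H¹(G). Then: (a) û := u|_V satisfies the combinatorial equation −Δ_d û(v) = ρ|û(v)|^{p−2}û(v) for every v ∈ V, where Δ_d f(v) := Σ_{w∈V, w∼v} (1/ℓ_{vw})(f(w) − f(v)); (b) ‖u'‖₂² = [û]²_{H¹(V)} where [f]²_{H¹(V)} := Σ_{vw∈E_K} (1/ℓ_{vw})(f(w) − f(v))²; and (c) there exists a constant S_{p,G} > 0, depending only on p and G (not on ρ or u), such that ½‖u'‖₂² − (ρ/p)Σ_{v∈V}|u(v)|^p ≤ S_{p,G}. -/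

import Mathlib

open MeasureTheory Filter Topology Set
open scoped ENNReal

/-- A metric graph with finitely many vertices and edges.  Each edge `e` has a length
`length e ∈ (0,∞]`; `length e = ⊤` means that `e` is a half-line `[0,∞)`. The
endpoint of `e` identified with `0` is `src e`; for a bounded edge the endpoint
identified with `ℓ_e` is `dst e`; a half-line has no second endpoint (`dst e = none`). -/
structure MetricGraph where
  V : Type
  E : Type
  fintV : Fintype V
  fintE : Fintype E
  decV : DecidableEq V
  length : E → ℝ≥0∞
  length_pos : ∀ e, 0 < length e
  src : E → V
  dst : E → Option V
  dst_none_iff : ∀ e, dst e = none ↔ length e = ⊤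

attribute [instance] MetricGraph.fintV MetricGraph.fintE MetricGraph.decV

namespace MetricGraph

variable (G : MetricGraph)

/-- The interval `I_e` that edge `e` is identified with. -/
def interval (e : G.E) : Set ℝ :=
  if G.length e = ⊤ then Set.Ici 0 else Set.Icc 0 (G.length e).toReal

/-- Two vertices are adjacent if some bounded edge joins them. -/
def Adj (v w : G.V) : Prop :=
  ∃ e, (G.src e = v ∧ G.dst e = some w) ∨ (G.src e = w ∧ G.dst e = some v)

/-- The graph is connected. -/
def Connected : Prop := ∀ v w : G.V, Relation.ReflTransGen G.Adj v w

/-- The graph is noncompact, i.e. it has at least one half-line. -/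
def Noncompact : Prop := ∃ e, G.length e = ⊤

/-- The graph is compact, i.e. all edges are bounded. -/
def IsCompactGraph : Prop := ∀ e, G.length e ≠ ⊤

/-- Raw data of a function on the graph: the family of edge functions, the family of their
derivatives, and the family of vertex values. -/
abbrev Fun : Type := (G.E → ℝ → ℝ) × (G.E → ℝ → ℝ) × (G.V → ℝ)

/-- The edge functions `u_e`. -/
def eFun (u : G.Fun) : G.E → ℝ → ℝ := u.1

/-- The edge derivatives `u_e'`. -/
def eDeriv (u : G.Fun) : G.E → ℝ → ℝ := u.2.1

/-- The vertex values `u(v)`. -/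
def vVal (u : G.Fun) : G.V → ℝ := u.2.2

/-- `u ∈ H¹(G)`: every edge function is continuous on `I_e` with derivative `eDeriv u e`
in the interior, both the function and its derivative are in `L²(I_e)`, and the edge
functions take the common value `vVal u v` at each vertex `v` (continuity at vertices). -/
def IsH1 (u : G.Fun) : Prop :=
  (∀ e, ContinuousOn (G.eFun u e) (G.interval e)) ∧
  (∀ e, ∀ x ∈ interior (G.interval e), HasDerivAt (G.eFun u e) (G.eDeriv u e x) x) ∧
  (∀ e, MemLp (G.eFun u e) 2 (volume.restrict (G.interval e))) ∧
  (∀ e, MemLp (G.eDeriv u e) 2 (volume.restrict (G.interval e))) ∧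
  (∀ e, G.eFun u e 0 = G.vVal u (G.src e)) ∧
  (∀ e v, G.dst e = some v → G.eFun u e (G.length e).toReal = G.vVal u v)

/-- `‖u‖₂²`. -/
noncomputable def l2sq (u : G.Fun) : ℝ := ∑ e, ∫ x in G.interval e, (G.eFun u e x) ^ 2

/-- `‖u'‖₂²`. -/
noncomputable def dsq (u : G.Fun) : ℝ := ∑ e, ∫ x in G.interval e, (G.eDeriv u e x) ^ 2

/-- `‖u‖²_{H¹(G)}`. -/
noncomputable def h1sq (u : G.Fun) : ℝ := G.dsq u + G.l2sq u

/-- `‖u‖_{H¹(G)}`. -/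
noncomputable def h1norm (u : G.Fun) : ℝ := Real.sqrt (G.h1sq u)

/-- The `L²(G)` inner product. -/
noncomputable def l2inner (u w : G.Fun) : ℝ :=
  ∑ e, ∫ x in G.interval e, G.eFun u e x * G.eFun w e x

/-- `∫_G u'w' dx`. -/
noncomputable def dinner (u w : G.Fun) : ℝ :=
  ∑ e, ∫ x in G.interval e, G.eDeriv u e x * G.eDeriv w e x

/-- The `H¹(G)` inner product. -/
noncomputable def h1inner (u w : G.Fun) : ℝ := G.dinner u w + G.l2inner u w

/-- `Σ_{v∈V} |u(v)|^{p-2} u(v) η(v)`. -/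
noncomputable def vertexTerm (p : ℝ) (u η : G.Fun) : ℝ :=
  ∑ v, |G.vVal u v| ^ (p - 2) * G.vVal u v * G.vVal η v

/-- `Σ_{v∈V} |u(v)|^p`. -/
noncomputable def vertexLp (p : ℝ) (u : G.Fun) : ℝ := ∑ v, |G.vVal u v| ^ p

/-- The energy functional `E_ρ(u, G) = ½‖u'‖₂² − (ρ/p) Σ_{v∈V} |u(v)|^p`. -/
noncomputable def energy (p ρ : ℝ) (u : G.Fun) : ℝ :=
  (1 / 2) * G.dsq u - (ρ / p) * G.vertexLp p u

/-- `E_ρ'(u, G)[η] = ∫_G u'η' dx − ρ Σ_{v∈V} |u(v)|^{p−2} u(v) η(v)`. -/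
noncomputable def energyDeriv (p ρ : ℝ) (u η : G.Fun) : ℝ :=
  G.dinner u η - ρ * G.vertexTerm p u η

/-- `E_ρ''(u, G)[w,w] = ∫_G |w'|² dx − (p−1) ρ Σ_{v∈V} |u(v)|^{p−2} w(v)²`. -/
noncomputable def energyDeriv2 (p ρ : ℝ) (u w : G.Fun) : ℝ :=
  G.dsq w - (p - 1) * ρ * ∑ v, |G.vVal u v| ^ (p - 2) * (G.vVal w v) ^ 2

/-- `(u, λ)` is a weak solution of `u'' = λ u` on every edge with the nonlinear vertex
conditions `Σ_{e ≻ v} u_e'(v) = −ρ |u(v)|^{p−2} u(v)` at every vertex, i.e.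
`∫_G u'η' dx + λ ∫_G uη dx = ρ Σ_{v∈V} |u(v)|^{p−2} u(v) η(v)` for all `η ∈ H¹(G)`. -/
def IsWeakSolution (p ρ lam : ℝ) (u : G.Fun) : Prop :=
  ∀ η : G.Fun, G.IsH1 η →
    G.dinner u η + lam * G.l2inner u η = ρ * G.vertexTerm p u η

end MetricGraph

namespace MetricGraph

/-- The (weighted) graph Laplacian of the compact core:
`Δ_d f(v) = Σ_{w ∼ v} (1/ℓ_{vw}) (f(w) − f(v))`, the sum running over all bounded edges
incident at `v` (both incidences of a loop contribute). -/
noncomputable def discLap (G : MetricGraph) (f : G.V → ℝ) (v : G.V) : ℝ :=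
  ∑ e, ((if G.src e = v then
          (G.dst e).elim 0 (fun w => ((G.length e).toReal)⁻¹ * (f w - f v))
        else 0) +
        (if G.dst e = some v then ((G.length e).toReal)⁻¹ * (f (G.src e) - f v) else 0))

/-- The combinatorial `H¹`-seminorm squared:
`[f]²_{H¹(V)} = Σ_{vw ∈ E_K} (1/ℓ_{vw}) (f(w) − f(v))²`, summed over bounded edges. -/
noncomputable def combSemiNormSq (G : MetricGraph) (f : G.V → ℝ) : ℝ :=
  ∑ e, (G.dst e).elim 0 (fun w => ((G.length e).toReal)⁻¹ * (f w - f (G.src e)) ^ 2)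

end MetricGraph

section Helpers
open MeasureTheory Real Set

private lemma integrable_mul_of_memL2 {ν : Measure ℝ} {f g : ℝ → ℝ}
    (hf : MemLp f 2 ν) (hg : MemLp g 2 ν) :
    Integrable (fun x => f x * g x) ν := by
  have h : MemLp (f • g) 1 ν := hg.smul hf
  have h2 := memLp_one_iff_integrable.mp h
  exact h2

private lemma hasDerivAt_expNeg (b x : ℝ) :
    HasDerivAt (fun y => exp (-(b * y))) (-b * exp (-(b * x))) x := by
  have h := ((hasDerivAt_id x).const_mul (-b)).exp
  simpa [neg_mul, mul_comm] using h

private lemma integrableOn_expNeg {b : ℝ} (hb : 0 < b) :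
    IntegrableOn (fun x => exp (-(b * x))) (Ici (0:ℝ)) := by
  rw [integrableOn_Ici_iff_integrableOn_Ioi]
  simpa [neg_mul] using exp_neg_integrableOn_Ioi 0 hb

private lemma memL2_expNeg {b : ℝ} (hb : 0 < b) :
    MemLp (fun x => exp (-(b * x))) 2 (volume.restrict (Ici (0:ℝ))) := by
  rw [memLp_two_iff_integrable_sq (Continuous.aestronglyMeasurable (by continuity))]
  have h := integrableOn_expNeg (b := 2 * b) (by linarith)
  apply h.congr
  refine ae_of_all _ fun x => ?_
  show rexp (-(2 * b * x)) = rexp (-(b * x)) ^ 2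
  rw [sq, ← Real.exp_add]
  ring_nf

private lemma memL2_expNeg1 :
    MemLp (fun x => exp (-x)) 2 (volume.restrict (Ici (0:ℝ))) := by
  simpa using memL2_expNeg one_pos

private lemma integral_expNeg {b : ℝ} (hb : 0 < b) :
    ∫ x in Ici (0:ℝ), exp (-(b * x)) = 1 / b := by
  rw [integral_Ici_eq_integral_Ioi]
  have hd : ∀ x ∈ Ici (0:ℝ), HasDerivAt (fun y => -exp (-(b * y)) / b) (exp (-(b * x))) x := by
    intro x _
    have h := ((hasDerivAt_expNeg b x).neg).div_const b
    refine h.congr_deriv ?_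
    rw [neg_mul, neg_neg, mul_div_cancel_left₀ _ hb.ne']
  have hint : IntegrableOn (fun x => exp (-(b * x))) (Ioi (0:ℝ)) := by
    simpa [neg_mul] using exp_neg_integrableOn_Ioi 0 hb
  have h1 : Filter.Tendsto (fun y : ℝ => b * y) Filter.atTop Filter.atTop :=
    Filter.Tendsto.const_mul_atTop hb Filter.tendsto_id
  have h2 : Filter.Tendsto (fun y : ℝ => -(b * y)) Filter.atTop Filter.atBot :=
    Filter.tendsto_neg_atTop_atBot.comp h1
  have h3 : Filter.Tendsto (fun y : ℝ => exp (-(b * y))) Filter.atTop (nhds 0) :=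
    Real.tendsto_exp_atBot.comp h2
  have htend : Filter.Tendsto (fun y : ℝ => -exp (-(b * y)) / b) Filter.atTop (nhds 0) := by
    have := (h3.neg).div_const b
    simpa using this
  rw [integral_Ioi_of_hasDerivAt_of_tendsto' hd hint htend]
  simp
  field_simp

private lemma memL2_of_cont_Icc {L : ℝ} {f : ℝ → ℝ} (hf : Continuous f) :
    MemLp f 2 (volume.restrict (Icc (0:ℝ) L)) := by
  haveI : IsFiniteMeasure (volume.restrict (Icc (0:ℝ) L)) :=
    ⟨by rw [Measure.restrict_apply_univ]; exact measure_Icc_lt_top⟩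
  obtain ⟨C, hC⟩ : ∃ C, ∀ x ∈ Icc (0:ℝ) L, ‖f x‖ ≤ C := by
    rcases (isCompact_Icc (a := (0:ℝ)) (b := L)).exists_bound_of_continuousOn
      (hf.norm.continuousOn) with ⟨C, hC⟩
    exact ⟨C, fun x hx => by simpa using hC x hx⟩
  refine MemLp.of_bound hf.aestronglyMeasurable C ?_
  rw [ae_restrict_iff' measurableSet_Icc]
  exact ae_of_all _ hC

private lemma ftc_Icc {f f' : ℝ → ℝ} {L : ℝ} (hL : 0 < L)
    (hc : ContinuousOn f (Icc 0 L))
    (hd : ∀ x ∈ Ioo (0:ℝ) L, HasDerivAt f (f' x) x)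
    (hi : MemLp f' 2 (volume.restrict (Icc (0:ℝ) L))) :
    ∫ x in Icc (0:ℝ) L, f' x = f L - f 0 := by
  haveI : IsFiniteMeasure (volume.restrict (Icc (0:ℝ) L)) :=
    ⟨by rw [Measure.restrict_apply_univ]; exact measure_Icc_lt_top⟩
  have hint : IntegrableOn f' (Icc 0 L) := hi.integrable one_le_two
  rw [integral_Icc_eq_integral_Ioc, ← intervalIntegral.integral_of_le hL.le]
  exact intervalIntegral.integral_eq_sub_of_hasDeriv_right_of_le hL.le hc
    (fun x hx => (hd x hx).hasDerivWithinAt)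
    ((intervalIntegrable_iff_integrableOn_Icc_of_le hL.le).mpr hint)

end Helpers

namespace MetricGraph
open MeasureTheory Real Set

variable {G : MetricGraph}

/-- Test function supported on one edge, vanishing at all vertices. -/
noncomputable def single (G : MetricGraph) [DecidableEq G.E] (e₀ : G.E) (f f' : ℝ → ℝ) : G.Fun :=
  (fun e x => if e = e₀ then f x else 0,
   fun e x => if e = e₀ then f' x else 0,
   fun _ => 0)

lemma single_isH1 [DecidableEq G.E] {e₀ : G.E} {f f' : ℝ → ℝ}
    (hc : ContinuousOn f (G.interval e₀))
    (hd : ∀ x ∈ interior (G.interval e₀), HasDerivAt f (f' x) x)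
    (h2 : MemLp f 2 (volume.restrict (G.interval e₀)))
    (h2' : MemLp f' 2 (volume.restrict (G.interval e₀)))
    (h0 : f 0 = 0)
    (hL : f (G.length e₀).toReal = 0) :
    G.IsH1 (G.single e₀ f f') := by
  refine ⟨fun e => ?_, fun e x hx => ?_, fun e => ?_, fun e => ?_, fun e => ?_, fun e v hv => ?_⟩
  · by_cases he : e = e₀
    · subst he; simpa [single, eFun] using hc
    · simp only [single, eFun, if_neg he]
      exact continuousOn_const
  · by_cases he : e = e₀
    · subst he; simpa [single, eFun, eDeriv] using hd x hx
    · simp only [single, eFun, eDeriv, if_neg he]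
      exact hasDerivAt_const x 0
  · by_cases he : e = e₀
    · subst he; simpa [single, eFun] using h2
    · simp only [single, eFun, if_neg he]
      exact MemLp.zero'
  · by_cases he : e = e₀
    · subst he; simpa [single, eDeriv] using h2'
    · simp only [single, eDeriv, if_neg he]
      exact MemLp.zero'
  · by_cases he : e = e₀
    · subst he; simpa [single, eFun, vVal] using h0
    · simp [single, eFun, vVal, if_neg he]
  · by_cases he : e = e₀
    · subst he; simpa [single, eFun, vVal] using hL
    · simp [single, eFun, vVal, if_neg he]

lemma single_test [DecidableEq G.E] {p ρ : ℝ} {u : G.Fun}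
    (hsol : G.IsWeakSolution p ρ 0 u) {e₀ : G.E} {f f' : ℝ → ℝ}
    (hη : G.IsH1 (G.single e₀ f f')) :
    ∫ x in G.interval e₀, G.eDeriv u e₀ x * f' x = 0 := by
  have h := hsol _ hη
  have hv : G.vertexTerm p u (G.single e₀ f f') = 0 := by
    simp [vertexTerm, single, vVal]
  rw [hv, mul_zero, zero_mul, add_zero] at h
  have hdin : G.dinner u (G.single e₀ f f')
      = ∫ x in G.interval e₀, G.eDeriv u e₀ x * f' x := by
    unfold dinner
    rw [Finset.sum_eq_single_of_mem e₀ (Finset.mem_univ _)]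
    · simp [single, eDeriv]
    · intro e _ he
      simp [single, eDeriv, if_neg he]
  rw [← hdin, h]

end MetricGraph

namespace MetricGraph
open MeasureTheory Real Set

variable {G : MetricGraph}

lemma interval_eq_Icc {e : G.E} (hne : G.length e ≠ ⊤) :
    G.interval e = Icc 0 (G.length e).toReal := if_neg hne

lemma interval_eq_Ici {e : G.E} (htop : G.length e = ⊤) :
    G.interval e = Ici 0 := if_pos htop

lemma length_toReal_pos {e : G.E} (hne : G.length e ≠ ⊤) :
    0 < (G.length e).toReal :=
  ENNReal.toReal_pos (G.length_pos e).ne' hne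

lemma dst_some {e : G.E} (hne : G.length e ≠ ⊤) : ∃ w, G.dst e = some w := by
  rcases h : G.dst e with _ | w
  · exact absurd ((G.dst_none_iff e).mp h) hne
  · exact ⟨w, rfl⟩

lemma ne_top_of_dst {e : G.E} {w : G.V} (hw : G.dst e = some w) : G.length e ≠ ⊤ := by
  intro h
  rw [(G.dst_none_iff e).mpr h] at hw
  cases hw

instance finIcc (L : ℝ) : IsFiniteMeasure (volume.restrict (Icc (0:ℝ) L)) :=
  ⟨by rw [Measure.restrict_apply_univ]; exact measure_Icc_lt_top⟩

/-- FTC on a bounded edge. -/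
lemma edge_ftc {u : G.Fun} (hu : G.IsH1 u) {e : G.E} {w : G.V}
    (hw : G.dst e = some w) :
    ∫ x in G.interval e, G.eDeriv u e x = G.vVal u w - G.vVal u (G.src e) := by
  have hne := ne_top_of_dst hw
  have hL := length_toReal_pos (G := G) hne
  have hIcc := interval_eq_Icc (G := G) hne
  have hC := hu.1 e
  have hD := hu.2.1 e
  have hM := hu.2.2.2.1 e
  rw [hIcc] at hC hM
  rw [hIcc]
  have := ftc_Icc hL hC (fun x hx => hD x (by rw [hIcc, interior_Icc]; exact hx)) hM
  rw [this, hu.2.2.2.2.2 e w hw, hu.2.2.2.2.1 e]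

/-- The L² norm of u' on a bounded edge. -/
lemma edge_deriv_sq [DecidableEq G.E] {p ρ : ℝ} {u : G.Fun} (hu : G.IsH1 u)
    (hsol : G.IsWeakSolution p ρ 0 u) {e : G.E} {w : G.V}
    (hw : G.dst e = some w) :
    ∫ x in G.interval e, (G.eDeriv u e x) ^ 2
      = ((G.length e).toReal)⁻¹ * (G.vVal u w - G.vVal u (G.src e)) ^ 2 := by
  have hne := ne_top_of_dst hw
  have hL := length_toReal_pos (G := G) hne
  have hIcc := interval_eq_Icc (G := G) hne
  set L := (G.length e).toReal with hLdef
  set Δ := G.vVal u w - G.vVal u (G.src e) with hΔ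
  set c := L⁻¹ * Δ with hc
  set f : ℝ → ℝ := fun x => G.eFun u e x - (G.eFun u e 0 + c * x) with hf
  set f' : ℝ → ℝ := fun x => G.eDeriv u e x - c with hf'
  have hcontf : Continuous (fun x : ℝ => G.eFun u e 0 + c * x) := by continuity
  have hη : G.IsH1 (G.single e f f') := by
    refine single_isH1 ?_ ?_ ?_ ?_ ?_ ?_
    · exact (hu.1 e).sub hcontf.continuousOn
    · intro x hx
      have h1 := hu.2.1 e x hx
      have h2 : HasDerivAt (fun y : ℝ => G.eFun u e 0 + c * y) c x := by
        exact ((hasDerivAt_const x (G.eFun u e 0)).add ((hasDerivAt_id x).const_mul c)).congr_deriv (by simp)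
      exact h1.sub h2
    · have h1 := hu.2.2.1 e
      rw [interval_eq_Icc (G := G) hne] at h1 ⊢
      exact h1.sub (memL2_of_cont_Icc hcontf)
    · have h1 := hu.2.2.2.1 e
      rw [interval_eq_Icc (G := G) hne] at h1 ⊢
      exact h1.sub (memLp_const c)
    · simp [hf]
    · have h1 := hu.2.2.2.2.2 e w hw
      have h2 := hu.2.2.2.2.1 e
      rw [← hLdef] at h1
      simp only [hf, h1, h2, ← hLdef]
      rw [hc]
      field_simp
      ring
  have htest := single_test hsol hη
  have hM := hu.2.2.2.1 e
  have hMint : Integrable (G.eDeriv u e) (volume.restrict (G.interval e)) := by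
    rw [hIcc] at hM ⊢
    exact hM.integrable one_le_two
  have hsqint : Integrable (fun x => (G.eDeriv u e x) ^ 2) (volume.restrict (G.interval e)) :=
    hM.integrable_sq
  have expand : (fun x => G.eDeriv u e x * f' x)
      = fun x => (G.eDeriv u e x) ^ 2 - G.eDeriv u e x * c := by
    funext x; simp only [hf']; ring
  rw [expand] at htest
  rw [integral_sub hsqint (hMint.mul_const c)] at htest
  rw [MeasureTheory.integral_mul_const, edge_ftc hu hw, ← hΔ] at htest
  have : ∫ x in G.interval e, (G.eDeriv u e x) ^ 2 = Δ * c := by linarith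
  rw [this, hc]
  ring

/-- Facts on a half-line: `∫ u' e^{-x} = 0` and `∫ (u')² = 0`. -/
lemma halfline_facts [DecidableEq G.E] {p ρ : ℝ} {u : G.Fun} (hu : G.IsH1 u)
    (hsol : G.IsWeakSolution p ρ 0 u) {e : G.E} (htop : G.length e = ⊤) :
    (∫ x in G.interval e, G.eDeriv u e x * exp (-x) = 0) ∧
    (∫ x in G.interval e, (G.eDeriv u e x) ^ 2 = 0) := by
  have hIci := interval_eq_Ici (G := G) htop
  have hM : MemLp (G.eDeriv u e) 2 (volume.restrict (Ici (0:ℝ))) := by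
    rw [← hIci]; exact hu.2.2.2.1 e
  have hMf : MemLp (G.eFun u e) 2 (volume.restrict (Ici (0:ℝ))) := by
    rw [← hIci]; exact hu.2.2.1 e
  have hexp1 : MemLp (fun x : ℝ => exp (-x)) 2 (volume.restrict (Ici (0:ℝ))) := memL2_expNeg1
  set B := ∫ x in Ici (0:ℝ), G.eDeriv u e x * exp (-x) with hB
  set A := ∫ x in Ici (0:ℝ), (G.eDeriv u e x) ^ 2 with hA
  have hAnn : 0 ≤ A := integral_nonneg fun x => sq_nonneg _
  have intB : Integrable (fun x => G.eDeriv u e x * exp (-x)) (volume.restrict (Ici (0:ℝ))) :=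
    integrable_mul_of_memL2 hM hexp1
  -- Step 1 : B = 0
  have hstep1 : ∀ μ : ℝ, 0 < μ → B = ∫ x in Ici (0:ℝ), G.eDeriv u e x * (μ * exp (-(μ * x))) := by
    intro μ hμ
    set f : ℝ → ℝ := fun x => exp (-x) - exp (-(μ * x)) with hfd
    set f' : ℝ → ℝ := fun x => -exp (-x) + μ * exp (-(μ * x)) with hfd'
    have hη : G.IsH1 (G.single e f f') := by
      refine single_isH1 ?_ ?_ ?_ ?_ ?_ ?_
      · exact (by continuity : Continuous f).continuousOn
      · intro x _
        have h1 : HasDerivAt (fun y : ℝ => exp (-y)) (-exp (-x)) x := by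
          simpa using ((hasDerivAt_id x).neg).exp
        have h2 := hasDerivAt_expNeg μ x
        have := h1.sub h2
        refine this.congr_deriv ?_
        simp only [hfd']
        ring
      · rw [hIci]; exact hexp1.sub (memL2_expNeg hμ)
      · rw [hIci]
        have := (hexp1.neg).add ((memL2_expNeg hμ).const_mul μ)
        exact this
      · simp [hfd]
      · simp [hfd, htop]
    have htest := single_test hsol hη
    rw [hIci] at htest
    have expand : (fun x => G.eDeriv u e x * f' x)
        = fun x => G.eDeriv u e x * (μ * exp (-(μ * x))) - G.eDeriv u e x * exp (-x) := by
      funext x; simp only [hfd']; ring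
    rw [expand] at htest
    have intC : Integrable (fun x => G.eDeriv u e x * (μ * exp (-(μ * x))))
        (volume.restrict (Ici (0:ℝ))) :=
      integrable_mul_of_memL2 hM ((memL2_expNeg hμ).const_mul μ)
    rw [integral_sub intC intB] at htest
    linarith
  have hBbound : ∀ ε : ℝ, 0 < ε → ∀ μ : ℝ, 0 < μ → |B| ≤ ε * A / 2 + μ / (4 * ε) := by
    intro ε hε μ hμ
    rw [hstep1 μ hμ]
    set g : ℝ → ℝ := fun x => μ * exp (-(μ * x)) with hg
    have intC : Integrable (fun x => G.eDeriv u e x * g x) (volume.restrict (Ici (0:ℝ))) :=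
      integrable_mul_of_memL2 hM ((memL2_expNeg hμ).const_mul μ)
    have hgsq : Integrable (fun x => (g x) ^ 2) (volume.restrict (Ici (0:ℝ))) :=
      ((memL2_expNeg hμ).const_mul μ).integrable_sq
    have hdom : Integrable (fun x => (ε * (G.eDeriv u e x) ^ 2 + (g x) ^ 2 / ε) / 2)
        (volume.restrict (Ici (0:ℝ))) := by
      apply Integrable.div_const
      exact (hM.integrable_sq.const_mul ε).add (hgsq.div_const ε)
    have habs : |∫ x in Ici (0:ℝ), G.eDeriv u e x * g x|
        ≤ ∫ x in Ici (0:ℝ), |G.eDeriv u e x * g x| := by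
      have h := norm_integral_le_integral_norm
        (μ := volume.restrict (Ici (0:ℝ))) (f := fun x => G.eDeriv u e x * g x)
      simpa only [Real.norm_eq_abs] using h
    have hmono : ∫ x in Ici (0:ℝ), |G.eDeriv u e x * g x|
        ≤ ∫ x in Ici (0:ℝ), (ε * (G.eDeriv u e x) ^ 2 + (g x) ^ 2 / ε) / 2 := by
      apply integral_mono intC.abs hdom
      intro x
      dsimp only
      have hgpos : 0 < g x := by simp only [hg]; positivity
      have h1 : |G.eDeriv u e x * g x| = |G.eDeriv u e x| * g x := by
        rw [abs_mul, abs_of_pos hgpos]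
      have hkey : ε * |G.eDeriv u e x| ^ 2 + (g x) ^ 2 / ε - |G.eDeriv u e x| * g x * 2
          = (ε * |G.eDeriv u e x| - g x) ^ 2 / ε := by
        field_simp
        ring_nf
      have hsq : 0 ≤ (ε * |G.eDeriv u e x| - g x) ^ 2 / ε := by positivity
      rw [h1, ← sq_abs (G.eDeriv u e x)]
      linarith
    have hval : ∫ x in Ici (0:ℝ), (ε * (G.eDeriv u e x) ^ 2 + (g x) ^ 2 / ε) / 2
        = ε * A / 2 + μ / (4 * ε) := by
      rw [integral_div, integral_add (hM.integrable_sq.const_mul ε) (hgsq.div_const ε),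
        integral_const_mul, integral_div]
      have : (fun x => (g x) ^ 2) = fun x => μ ^ 2 * exp (-(2 * μ * x)) := by
        funext x
        simp only [hg, mul_pow, sq (exp _), ← Real.exp_add]
        ring_nf
      rw [this, integral_const_mul, integral_expNeg (by linarith : (0:ℝ) < 2 * μ)]
      rw [← hA]
      field_simp
      ring
    calc |∫ x in Ici (0:ℝ), G.eDeriv u e x * g x|
        ≤ ∫ x in Ici (0:ℝ), |G.eDeriv u e x * g x| := habs
      _ ≤ _ := hmono
      _ = _ := hval
  have hB0 : B = 0 := by
    have hle : |B| ≤ 0 := by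
      apply le_of_forall_pos_le_add
      intro δ hδ
      have hε : (0:ℝ) < δ / (A + 1) := by positivity
      have := hBbound (δ / (A + 1)) hε (2 * δ * (δ / (A + 1))) (by positivity)
      have h1 : δ / (A + 1) * A / 2 ≤ δ / 2 := by
        rw [div_mul_eq_mul_div, div_div]
        rw [div_le_div_iff₀ (by positivity) (by norm_num)]
        nlinarith
      have h2 : 2 * δ * (δ / (A + 1)) / (4 * (δ / (A + 1))) = δ / 2 := by
        field_simp
        ring
      rw [h2] at this
      linarith
    have := abs_nonneg B
    have : |B| = 0 := le_antisymm hle (abs_nonneg B)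
    exact abs_eq_zero.mp this
  -- Step 2 : A = 0
  have hA0 : A = 0 := by
    set u₀ := G.eFun u e 0 with hu₀
    set f : ℝ → ℝ := fun x => G.eFun u e x - u₀ * exp (-x) with hfd
    set f' : ℝ → ℝ := fun x => G.eDeriv u e x + u₀ * exp (-x) with hfd'
    have hη : G.IsH1 (G.single e f f') := by
      refine single_isH1 ?_ ?_ ?_ ?_ ?_ ?_
      · exact (hu.1 e).sub (by continuity : Continuous fun x : ℝ => u₀ * exp (-x)).continuousOn
      · intro x hx
        have h1 := hu.2.1 e x hx
        have h2 : HasDerivAt (fun y : ℝ => u₀ * exp (-y)) (-(u₀ * exp (-x))) x := by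
          have h0 : HasDerivAt (fun y : ℝ => -y) (-1 : ℝ) x := (hasDerivAt_id x).neg
          have := (h0.exp).const_mul u₀
          refine this.congr_deriv ?_
          ring
        have := h1.sub h2
        exact this.congr_deriv (by simp only [hfd']; ring)
      · rw [hIci]; exact hMf.sub (hexp1.const_mul u₀)
      · rw [hIci]; exact hM.add (hexp1.const_mul u₀)
      · simp [hfd, hu₀]
      · simp [hfd, htop, hu₀]
    have htest := single_test hsol hη
    rw [hIci] at htest
    have expand : (fun x => G.eDeriv u e x * f' x)
        = fun x => (G.eDeriv u e x) ^ 2 + u₀ * (G.eDeriv u e x * exp (-x)) := by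
      funext x; simp only [hfd']; ring
    rw [expand] at htest
    rw [integral_add hM.integrable_sq (intB.const_mul u₀), integral_const_mul] at htest
    rw [← hB, hB0, mul_zero, add_zero] at htest
    exact htest
  constructor
  · rw [hIci, ← hB]; exact hB0
  · rw [hIci, ← hA]; exact hA0

end MetricGraph

namespace MetricGraph
open MeasureTheory Real Set

variable {G : MetricGraph}

/-- The "hat" test function at a vertex `v`. -/
noncomputable def hat (G : MetricGraph) (v : G.V) : G.Fun :=
  (fun e x => if G.length e = ⊤ then (if G.src e = v then (1:ℝ) else 0) * exp (-x)
      else (if G.src e = v then (1:ℝ) else 0) +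
        ((if G.dst e = some v then (1:ℝ) else 0) - (if G.src e = v then (1:ℝ) else 0))
          / (G.length e).toReal * x,
   fun e x => if G.length e = ⊤ then -((if G.src e = v then (1:ℝ) else 0) * exp (-x))
      else ((if G.dst e = some v then (1:ℝ) else 0) - (if G.src e = v then (1:ℝ) else 0))
          / (G.length e).toReal,
   fun w => if w = v then 1 else 0)

lemma hat_isH1 (v : G.V) : G.IsH1 (G.hat v) := by
  refine ⟨fun e => ?_, fun e x hx => ?_, fun e => ?_, fun e => ?_, fun e => ?_, fun e w hw => ?_⟩
  · by_cases hl : G.length e = ⊤ <;> simp only [hat, eFun, if_pos, if_neg, hl, if_true, if_false]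
    · exact ((continuous_const.mul (by continuity)).continuousOn)
    · exact (continuous_const.add (continuous_const.mul continuous_id')).continuousOn
  · by_cases hl : G.length e = ⊤ <;> simp only [hat, eFun, eDeriv, hl, if_true, if_false]
    · have h0 : HasDerivAt (fun y : ℝ => -y) (-1 : ℝ) x := (hasDerivAt_id x).neg
      have := (h0.exp).const_mul (if G.src e = v then (1:ℝ) else 0)
      refine this.congr_deriv ?_
      ring
    · have := ((hasDerivAt_id x).const_mul
        (((if G.dst e = some v then (1:ℝ) else 0) - (if G.src e = v then (1:ℝ) else 0))
          / (G.length e).toReal)).const_add (if G.src e = v then (1:ℝ) else 0)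
      simpa using this
  · by_cases hl : G.length e = ⊤ <;> simp only [hat, eFun, hl, if_true, if_false]
    · rw [interval_eq_Ici (G := G) hl]
      exact memL2_expNeg1.const_mul _
    · rw [interval_eq_Icc (G := G) hl]
      exact memL2_of_cont_Icc (by continuity)
  · by_cases hl : G.length e = ⊤ <;> simp only [hat, eDeriv, hl, if_true, if_false]
    · rw [interval_eq_Ici (G := G) hl]
      exact (memL2_expNeg1.const_mul _).neg
    · rw [interval_eq_Icc (G := G) hl]
      exact memLp_const _
  · by_cases hl : G.length e = ⊤ <;> simp [hat, eFun, vVal, hl]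
  · have hne := ne_top_of_dst hw
    have hL := length_toReal_pos (G := G) hne
    simp only [hat, eFun, vVal, if_neg hne, hw, Option.some.injEq]
    rw [div_mul_cancel₀ _ hL.ne']
    ring

lemma dinner_hat [DecidableEq G.E] {p ρ : ℝ} {u : G.Fun} (hu : G.IsH1 u)
    (hsol : G.IsWeakSolution p ρ 0 u) (v : G.V) :
    G.dinner u (G.hat v) = -(G.discLap (G.vVal u) v) := by
  unfold dinner discLap
  rw [← Finset.sum_neg_distrib]
  apply Finset.sum_congr rfl
  intro e _
  by_cases hl : G.length e = ⊤
  · have hnone := (G.dst_none_iff e).mpr hl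
    have hint : (fun x => G.eDeriv u e x * G.eDeriv (G.hat v) e x)
        = fun x => (-(if G.src e = v then (1:ℝ) else 0)) * (G.eDeriv u e x * exp (-x)) := by
      funext x
      simp only [hat, eDeriv, hl, if_true]
      ring
    rw [hint, integral_const_mul, (halfline_facts hu hsol hl).1, mul_zero]
    simp [hnone]
  · obtain ⟨w, hw⟩ := dst_some hl
    have hL := length_toReal_pos (G := G) hl
    set L := (G.length e).toReal with hLdef
    set c := ((if G.dst e = some v then (1:ℝ) else 0) - (if G.src e = v then (1:ℝ) else 0)) / L
      with hc
    have hint : (fun x => G.eDeriv u e x * G.eDeriv (G.hat v) e x)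
        = fun x => G.eDeriv u e x * c := by
      funext x
      simp only [hat, eDeriv, hl, if_false, hc]
      rfl
    rw [hint, MeasureTheory.integral_mul_const, edge_ftc hu hw]
    rw [hc, hw] at *
    simp only [hw, Option.some.injEq]
    by_cases h1 : G.src e = v <;> by_cases h2 : w = v <;>
      simp only [h1, h2, if_true, if_false, Option.elim] <;> field_simp <;> ring

lemma vertexTerm_hat (p : ℝ) (u : G.Fun) (v : G.V) :
    G.vertexTerm p u (G.hat v) = |G.vVal u v| ^ (p - 2) * G.vVal u v := by
  unfold vertexTerm
  simp [hat, vVal, mul_ite, mul_one, mul_zero, Finset.sum_ite_eq']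

/-- Part (a). -/
lemma discrete_eq [DecidableEq G.E] {p ρ : ℝ} {u : G.Fun} (hu : G.IsH1 u)
    (hsol : G.IsWeakSolution p ρ 0 u) (v : G.V) :
    -G.discLap (G.vVal u) v = ρ * |G.vVal u v| ^ (p - 2) * G.vVal u v := by
  have h := hsol (G.hat v) (hat_isH1 v)
  rw [vertexTerm_hat, zero_mul, add_zero, dinner_hat hu hsol v] at h
  rw [h]
  ring

/-- Part (b). -/
lemma dsq_eq [DecidableEq G.E] {p ρ : ℝ} {u : G.Fun} (hu : G.IsH1 u)
    (hsol : G.IsWeakSolution p ρ 0 u) :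
    G.dsq u = G.combSemiNormSq (G.vVal u) := by
  unfold dsq combSemiNormSq
  apply Finset.sum_congr rfl
  intro e _
  by_cases hl : G.length e = ⊤
  · rw [(G.dst_none_iff e).mpr hl]
    simpa using (halfline_facts hu hsol hl).2
  · obtain ⟨w, hw⟩ := dst_some hl
    rw [hw]
    simpa using edge_deriv_sq hu hsol hw

end MetricGraph

namespace MetricGraph
open MeasureTheory Real Set

variable {G : MetricGraph}

lemma dsq_eq_vertexLp {p ρ : ℝ} (hp : 2 < p) {u : G.Fun} (hu : G.IsH1 u)
    (hsol : G.IsWeakSolution p ρ 0 u) :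
    G.dsq u = ρ * G.vertexLp p u := by
  have h := hsol u hu
  rw [zero_mul, add_zero] at h
  have h1 : G.dinner u u = G.dsq u := by
    unfold dinner dsq
    apply Finset.sum_congr rfl
    intro e _
    congr 1
    funext x
    rw [sq]
  have h2 : G.vertexTerm p u u = G.vertexLp p u := by
    unfold vertexTerm vertexLp
    apply Finset.sum_congr rfl
    intro v _
    by_cases hv : G.vVal u v = 0
    · rw [hv]
      simp [Real.zero_rpow (by linarith : p ≠ 0)]
    · have habs : (0:ℝ) < |G.vVal u v| := abs_pos.mpr hv
      have e2 : |G.vVal u v| ^ (2:ℝ) = G.vVal u v * G.vVal u v := by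
        rw [show (2:ℝ) = ((2:ℕ):ℝ) by norm_num, Real.rpow_natCast, sq_abs, sq]
      calc |G.vVal u v| ^ (p-2) * G.vVal u v * G.vVal u v
          = |G.vVal u v| ^ (p-2) * |G.vVal u v| ^ (2:ℝ) := by rw [mul_assoc, e2]
        _ = |G.vVal u v| ^ (p - 2 + 2) := (Real.rpow_add habs _ _).symm
        _ = |G.vVal u v| ^ p := by norm_num
  rw [← h1, h, h2]

end MetricGraph


/-- If `G` has non-empty compact core, `p > 2`, `ρ ∈ [1/2,1]`, and
`u ∈ H¹(G)` weakly solves `u'' = 0` on edges with vertex conditions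
`Σ_{e≻v} u_e'(v) = −ρ|u(v)|^{p−2}u(v)`, then: (a) the vertex restriction `û = u|_V`
solves `−Δ_d û = ρ|û|^{p−2}û` on `V`; (b) `‖u'‖₂² = [û]²_{H¹(V)}`; and (c) there is
`S_{p,G} > 0` depending only on `p` and `G` such that every such solution (for any
`ρ' ∈ [1/2,1]`) has energy at most `S_{p,G}`. -/
theorem zero_lambda_solutions_bounded_energy (G : MetricGraph) (hconn : G.Connected)
    (hnc : G.Noncompact) (hcore : ∃ e, G.length e ≠ ⊤)
    (p : ℝ) (hp : 2 < p) (ρ : ℝ) (hρ : ρ ∈ Set.Icc (1 / 2 : ℝ) 1)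
    (u : G.Fun) (hu : G.IsH1 u) (hsol : G.IsWeakSolution p ρ 0 u) :
    (∀ v, -G.discLap (G.vVal u) v = ρ * |G.vVal u v| ^ (p - 2) * G.vVal u v) ∧
    (G.dsq u = G.combSemiNormSq (G.vVal u)) ∧
    (∃ Spg > (0:ℝ), ∀ ρ' ∈ Set.Icc (1 / 2 : ℝ) 1, ∀ u' : G.Fun, G.IsH1 u' →
      G.IsWeakSolution p ρ' 0 u' → G.energy p ρ' u' ≤ Spg) := by
  classical
  obtain ⟨e₀, he₀⟩ := hcore
  refine ⟨MetricGraph.discrete_eq hu hsol, MetricGraph.dsq_eq hu hsol, ?_⟩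
  set n := (Fintype.card G.V : ℝ) with hn
  set C := ∑ e : G.E, ((G.length e).toReal)⁻¹ with hC
  have hC0 : 0 ≤ C := Finset.sum_nonneg fun e _ => inv_nonneg.mpr ENNReal.toReal_nonneg
  set Bd := max 1 ((8 * C) ^ (p - 2)⁻¹) with hBd
  have hBd1 : (1:ℝ) ≤ Bd := le_max_left _ _
  have hBd0 : (0:ℝ) < Bd := lt_of_lt_of_le one_pos hBd1
  have hn0 : 0 ≤ n := by positivity
  refine ⟨n * Bd ^ p / 2 + 1, by positivity, ?_⟩
  intro ρ' hρ' u' hu' hsol'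
  have hA := MetricGraph.discrete_eq hu' hsol'
  obtain ⟨v₀, -, hv₀⟩ := Finset.exists_max_image Finset.univ (fun v => |G.vVal u' v|)
    ⟨G.src e₀, Finset.mem_univ _⟩
  set M := |G.vVal u' v₀| with hM
  have hMn : 0 ≤ M := abs_nonneg _
  have hMb : ∀ v, |G.vVal u' v| ≤ M := fun v => hv₀ v (Finset.mem_univ v)
  have hρ'0 : (0:ℝ) ≤ ρ' := by linarith [hρ'.1]
  have hρ'1 : ρ' ≤ 1 := hρ'.2
  -- bound on the discrete Laplacian at v₀
  have hDL : |G.discLap (G.vVal u') v₀| ≤ 4 * C * M := by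
    unfold MetricGraph.discLap
    have hterm : ∀ e : G.E,
        |(if G.src e = v₀ then
            (G.dst e).elim 0 (fun w => ((G.length e).toReal)⁻¹ * (G.vVal u' w - G.vVal u' v₀))
          else 0) +
          (if G.dst e = some v₀ then
            ((G.length e).toReal)⁻¹ * (G.vVal u' (G.src e) - G.vVal u' v₀) else 0)|
        ≤ ((G.length e).toReal)⁻¹ * (4 * M) := by
      intro e
      have hLnn : (0:ℝ) ≤ ((G.length e).toReal)⁻¹ := inv_nonneg.mpr ENNReal.toReal_nonneg
      have hb : ∀ w : G.V, |((G.length e).toReal)⁻¹ * (G.vVal u' w - G.vVal u' v₀)|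
          ≤ ((G.length e).toReal)⁻¹ * (2 * M) := by
        intro w
        rw [abs_mul, abs_of_nonneg hLnn]
        apply mul_le_mul_of_nonneg_left _ hLnn
        calc |G.vVal u' w - G.vVal u' v₀| ≤ |G.vVal u' w| + |G.vVal u' v₀| := abs_sub _ _
          _ ≤ M + M := add_le_add (hMb w) (hMb v₀)
          _ = 2 * M := by ring
      have h1 : |(if G.src e = v₀ then
            (G.dst e).elim 0 (fun w => ((G.length e).toReal)⁻¹ * (G.vVal u' w - G.vVal u' v₀))
          else 0)| ≤ ((G.length e).toReal)⁻¹ * (2 * M) := by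
        split_ifs
        · rcases h : G.dst e with _ | w
          · simpa using by positivity
          · simpa using hb w
        · simpa using by positivity
      have h2 : |(if G.dst e = some v₀ then
            ((G.length e).toReal)⁻¹ * (G.vVal u' (G.src e) - G.vVal u' v₀) else 0)|
          ≤ ((G.length e).toReal)⁻¹ * (2 * M) := by
        split_ifs
        · exact hb _
        · simpa using by positivity
      calc |_ + _| ≤ _ + _ := abs_add_le _ _
        _ ≤ ((G.length e).toReal)⁻¹ * (2 * M) + ((G.length e).toReal)⁻¹ * (2 * M) :=
            add_le_add h1 h2
        _ = ((G.length e).toReal)⁻¹ * (4 * M) := by ring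
    calc |∑ e : G.E, _| ≤ ∑ e : G.E, |_| := Finset.abs_sum_le_sum_abs _ _
      _ ≤ ∑ e : G.E, ((G.length e).toReal)⁻¹ * (4 * M) :=
          Finset.sum_le_sum fun e _ => hterm e
      _ = 4 * C * M := by rw [← Finset.sum_mul]; ring
  -- bound M
  have hMB : M ≤ Bd := by
    by_cases hM0 : M = 0
    · rw [hM0]; exact hBd0.le
    · have hMpos : 0 < M := lt_of_le_of_ne hMn (Ne.symm hM0)
      have hkey : ρ' * M ^ (p - 2) * M ≤ 4 * C * M := by
        have h := hA v₀
        have habs := congrArg abs h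
        rw [abs_neg] at habs
        have hr : |ρ' * |G.vVal u' v₀| ^ (p - 2) * G.vVal u' v₀| = ρ' * M ^ (p - 2) * M := by
          rw [abs_mul, abs_mul, abs_of_nonneg hρ'0, abs_of_nonneg (Real.rpow_nonneg hMn _)]
        rw [hr] at habs
        rw [← habs]
        exact hDL
      have h8 : M ^ (p - 2) ≤ 8 * C := by
        have h2 : (1/2 : ℝ) * M ^ (p - 2) * M ≤ 4 * C * M := by
          have := mul_le_mul_of_nonneg_right
            (mul_le_mul_of_nonneg_right hρ'.1 (Real.rpow_nonneg hMn (p-2))) hMn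
          linarith [hkey]
        have := (mul_le_mul_iff_of_pos_right hMpos).mp (by linarith : M ^ (p-2) * M ≤ (8 * C) * M)
        linarith
      have hfin : M ≤ (8 * C) ^ (p - 2)⁻¹ := by
        have hne2 : p - 2 ≠ 0 := by linarith
        have e1 : (M ^ (p - 2)) ^ (p - 2)⁻¹ = M := by
          rw [← Real.rpow_mul hMn, mul_inv_cancel₀ hne2, Real.rpow_one]
        rw [← e1]
        exact Real.rpow_le_rpow (Real.rpow_nonneg hMn _) h8 (inv_nonneg.mpr (by linarith))
      exact hfin.trans (le_max_right _ _)
  -- bound the vertex Lp norm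
  have hS : G.vertexLp p u' ≤ n * Bd ^ p := by
    unfold MetricGraph.vertexLp
    calc ∑ v, |G.vVal u' v| ^ p ≤ ∑ _v : G.V, Bd ^ p :=
        Finset.sum_le_sum fun v _ =>
          Real.rpow_le_rpow (abs_nonneg _) ((hMb v).trans hMB) (by linarith)
      _ = n * Bd ^ p := by
        rw [Finset.sum_const, Finset.card_univ, nsmul_eq_mul, hn]
  have hS0 : 0 ≤ G.vertexLp p u' :=
    Finset.sum_nonneg fun v _ => Real.rpow_nonneg (abs_nonneg _) _
  have hd : G.dsq u' = ρ' * G.vertexLp p u' := MetricGraph.dsq_eq_vertexLp hp hu' hsol'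
  unfold MetricGraph.energy
  rw [hd]
  have hp0 : (0:ℝ) < p := by linarith
  have hfrac : 0 ≤ ρ' / p * G.vertexLp p u' := by positivity
  have hmono : ρ' * G.vertexLp p u' ≤ G.vertexLp p u' := by
    nlinarith [mul_nonneg (by linarith : (0:ℝ) ≤ 1 - ρ') hS0]
  nlinarith [hS, hS0, hfrac, hmono]
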